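/- Suppose char K = 2. Then the center of Γ is exactly the K-linear span of 1 together with the set of all elements aⁱbʲ with i ≥ 0 and j ≥ 1 (images in Γ of the corresponding words in a and b). In particular the center of Γ is isomorphic as a K-algebra to K ⊕ K[a,b]b, where b has degree 1 and ab has degree 2. -/

import Mathlib

set_option synthInstance.maxHeartbeats 1000000
set_option maxHeartbeats 1000000

variable (K : Type*) [Field K]

/-- Relations defining `Γ = KQ/(ab + ba, bc)` (the Koszul dual situation):
generators `e = ι 0`, `a = ι 1`, `b = ι 2`, `c = ι 3`, with the path algebra
relations for the quiver with two vertices, loops `a, b` at vertex 1 and an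
arrow `c`, together with `ab + ba = 0` and `bc = 0`. -/
inductive Grel : FreeAlgebra K (Fin 4) → FreeAlgebra K (Fin 4) → Prop
  | ee : Grel (FreeAlgebra.ι K 0 * FreeAlgebra.ι K 0) (FreeAlgebra.ι K 0)
  | ea : Grel (FreeAlgebra.ι K 0 * FreeAlgebra.ι K 1) (FreeAlgebra.ι K 1)
  | ae : Grel (FreeAlgebra.ι K 1 * FreeAlgebra.ι K 0) (FreeAlgebra.ι K 1)
  | eb : Grel (FreeAlgebra.ι K 0 * FreeAlgebra.ι K 2) (FreeAlgebra.ι K 2)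
  | be : Grel (FreeAlgebra.ι K 2 * FreeAlgebra.ι K 0) (FreeAlgebra.ι K 2)
  | ec : Grel (FreeAlgebra.ι K 0 * FreeAlgebra.ι K 3) (FreeAlgebra.ι K 3)
  | ce : Grel (FreeAlgebra.ι K 3 * FreeAlgebra.ι K 0) 0
  | abba : Grel (FreeAlgebra.ι K 1 * FreeAlgebra.ι K 2 + FreeAlgebra.ι K 2 * FreeAlgebra.ι K 1) 0
  | bc : Grel (FreeAlgebra.ι K 2 * FreeAlgebra.ι K 3) 0

/-- The algebra `Γ` (whose center computes `Z_gr(E(𝒜)) ≅ HH*(𝒜)/𝒩`). -/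
abbrev Galg := RingQuot (Grel K)

noncomputable def eG : Galg K := RingQuot.mkAlgHom K (Grel K) (FreeAlgebra.ι K 0)
noncomputable def aG : Galg K := RingQuot.mkAlgHom K (Grel K) (FreeAlgebra.ι K 1)
noncomputable def bG : Galg K := RingQuot.mkAlgHom K (Grel K) (FreeAlgebra.ι K 2)
noncomputable def cG : Galg K := RingQuot.mkAlgHom K (Grel K) (FreeAlgebra.ι K 3)

/-- The substitution `y ↦ 0` on `K[x,y]` (with `x = X 0`, `y = X 1`). -/
noncomputable def substY0 : MvPolynomial (Fin 2) K →ₐ[K] MvPolynomial (Fin 2) K :=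
  MvPolynomial.aeval (fun i => if i = 0 then MvPolynomial.X 0 else 0)

/-- The subalgebra `R = { f ∈ K[x,y] : f(x,0) is a constant } = K·1 + y·K[x,y]`
of the polynomial ring `K[x,y]`. -/
noncomputable def Rsub : Subalgebra K (MvPolynomial (Fin 2) K) :=
  Subalgebra.comap (substY0 K) ⊥

namespace CenterAux
set_option linter.unusedSectionVars false
noncomputable section
open MvPolynomial

variable {K : Type*} [Field K]

local notation "𝔸" => MvPolynomial (Fin 2) K

/-- Concrete model algebra: triples `(p, m, λ)` with multiplication
`(p,m,λ)(p',m',λ') = (pp', σ(p)m' + λ'•m, λλ')` where `σ = substY0`. -/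
def MM (K : Type*) [Field K] := MvPolynomial (Fin 2) K × MvPolynomial (Fin 2) K × K

instance : AddCommGroup (MM K) := inferInstanceAs (AddCommGroup (_ × _ × _))
instance : Module K (MM K) := inferInstanceAs (Module K (_ × _ × _))

instance : Mul (MM K) :=
  ⟨fun z w => (z.1 * w.1, substY0 K z.1 * w.2.1 + w.2.2 • z.2.1, z.2.2 * w.2.2)⟩
instance : One (MM K) := ⟨((1 : 𝔸), (0 : 𝔸), (1 : K))⟩

lemma MM.mul_def (z w : 𝔸 × 𝔸 × K) :
    @HMul.hMul (MM K) (MM K) (MM K) _ z w = (z.1 * w.1, substY0 K z.1 * w.2.1 + w.2.2 • z.2.1, z.2.2 * w.2.2) := rfl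
lemma MM.one_def : (1 : MM K) = ((1 : 𝔸), (0 : 𝔸), (1 : K)) := rfl
lemma MM.add_def (z w : 𝔸 × 𝔸 × K) :
    @HAdd.hAdd (MM K) (MM K) (MM K) _ z w = (z.1 + w.1, z.2.1 + w.2.1, z.2.2 + w.2.2) := rfl
lemma MM.smul_def (k : K) (z : 𝔸 × 𝔸 × K) :
    @HSMul.hSMul K (MM K) (MM K) _ k z = (k • z.1, k • z.2.1, k • z.2.2) := rfl
lemma MM.zero_def : (0 : MM K) = ((0 : 𝔸), (0 : 𝔸), (0 : K)) := rfl

instance : Ring (MM K) :=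
  { (inferInstance : AddCommGroup (MM K)), (inferInstance : Mul (MM K)),
    (inferInstance : One (MM K)) with
    mul_assoc := by
      rintro ⟨p, m, l⟩ ⟨p', m', l'⟩ ⟨p'', m'', l''⟩
      refine Prod.ext ?_ (Prod.ext ?_ ?_) <;>
        simp only [MM.mul_def, map_mul]
      · exact mul_assoc _ _ _
      · simp only [smul_add, mul_add, smul_smul, mul_smul_comm]
        rw [mul_assoc, mul_comm l'' l']
        abel
      · exact mul_assoc _ _ _
    one_mul := by
      rintro ⟨p, m, l⟩
      refine Prod.ext ?_ (Prod.ext ?_ ?_) <;>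
        simp [MM.mul_def, MM.one_def]
    mul_one := by
      rintro ⟨p, m, l⟩
      refine Prod.ext ?_ (Prod.ext ?_ ?_) <;>
        simp [MM.mul_def, MM.one_def]
    left_distrib := by
      rintro ⟨p, m, l⟩ ⟨p', m', l'⟩ ⟨p'', m'', l''⟩
      refine Prod.ext ?_ (Prod.ext ?_ ?_) <;>
        simp only [MM.mul_def, MM.add_def]
      · exact mul_add _ _ _
      · simp only [mul_add, add_smul, smul_add]
        abel
      · exact mul_add _ _ _
    right_distrib := by
      rintro ⟨p, m, l⟩ ⟨p', m', l'⟩ ⟨p'', m'', l''⟩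
      refine Prod.ext ?_ (Prod.ext ?_ ?_) <;>
        simp only [MM.mul_def, MM.add_def, map_add]
      · exact add_mul _ _ _
      · simp only [add_mul, smul_add, add_smul]
        abel
      · exact add_mul _ _ _
    zero_mul := by
      rintro ⟨p, m, l⟩
      refine Prod.ext ?_ (Prod.ext ?_ ?_) <;>
        simp [MM.mul_def, MM.zero_def]
    mul_zero := by
      rintro ⟨p, m, l⟩
      refine Prod.ext ?_ (Prod.ext ?_ ?_) <;>
        simp [MM.mul_def, MM.zero_def] }

instance : Algebra K (MM K) :=
  { smul := (· • ·)
    algebraMap :=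
      { toFun := fun k => ((MvPolynomial.C k : 𝔸), (0 : 𝔸), k)
        map_one' := by simp [MM.one_def]; rfl
        map_mul' := by intro x y; simp [MM.mul_def]; rfl
        map_zero' := by simp [MM.zero_def]; rfl
        map_add' := by intro x y; simp [MM.add_def]; rfl }
    commutes' := by
      rintro r ⟨p, m, l⟩
      change @HMul.hMul (MM K) (MM K) (MM K) _ ((MvPolynomial.C r : 𝔸), (0 : 𝔸), r) (p, m, l) =
        @HMul.hMul (MM K) (MM K) (MM K) _ (p, m, l) ((MvPolynomial.C r : 𝔸), (0 : 𝔸), r)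
      refine Prod.ext ?_ (Prod.ext ?_ ?_) <;>
        simp [MM.mul_def, Algebra.smul_def, mul_comm, RingHom.coe_mk, MonoidHom.coe_mk, OneHom.coe_mk]
    smul_def' := by
      rintro r ⟨p, m, l⟩
      change _ = @HMul.hMul (MM K) (MM K) (MM K) _ ((MvPolynomial.C r : 𝔸), (0 : 𝔸), r) (p, m, l)
      refine Prod.ext ?_ (Prod.ext ?_ ?_)
      · show r • p = _
        simp [MM.mul_def, Algebra.smul_def, MvPolynomial.algebraMap_eq, RingHom.coe_mk, MonoidHom.coe_mk, OneHom.coe_mk]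
      · show r • m = _
        simp [MM.mul_def, Algebra.smul_def, MvPolynomial.algebraMap_eq, RingHom.coe_mk, MonoidHom.coe_mk, OneHom.coe_mk]
      · show r • l = _
        simp [MM.mul_def, smul_eq_mul, RingHom.coe_mk, MonoidHom.coe_mk, OneHom.coe_mk] }

lemma MM.algebraMap_def (k : K) :
    (algebraMap K (MM K)) k = ((MvPolynomial.C k : 𝔸), (0 : 𝔸), k) := rfl

/-! ### Relations in `Γ` -/

section Gamma
variable (K)

lemma rel_ee : eG K * eG K = eG K := by
  simpa [eG, map_mul] using RingQuot.mkAlgHom_rel K (Grel.ee (K := K))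
lemma rel_ea : eG K * aG K = aG K := by
  simpa [eG, aG, map_mul] using RingQuot.mkAlgHom_rel K (Grel.ea (K := K))
lemma rel_ae : aG K * eG K = aG K := by
  simpa [eG, aG, map_mul] using RingQuot.mkAlgHom_rel K (Grel.ae (K := K))
lemma rel_eb : eG K * bG K = bG K := by
  simpa [eG, bG, map_mul] using RingQuot.mkAlgHom_rel K (Grel.eb (K := K))
lemma rel_be : bG K * eG K = bG K := by
  simpa [eG, bG, map_mul] using RingQuot.mkAlgHom_rel K (Grel.be (K := K))
lemma rel_ec : eG K * cG K = cG K := by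
  simpa [eG, cG, map_mul] using RingQuot.mkAlgHom_rel K (Grel.ec (K := K))
lemma rel_ce : cG K * eG K = 0 := by
  simpa [eG, cG, map_mul] using RingQuot.mkAlgHom_rel K (Grel.ce (K := K))
lemma rel_abba : aG K * bG K + bG K * aG K = 0 := by
  simpa [aG, bG, map_mul, map_add] using RingQuot.mkAlgHom_rel K (Grel.abba (K := K))
lemma rel_bc : bG K * cG K = 0 := by
  simpa [bG, cG, map_mul] using RingQuot.mkAlgHom_rel K (Grel.bc (K := K))

variable [CharP K 2]

lemma addself (x : Galg K) : x + x = 0 := by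
  rw [← two_smul K x, show (2 : K) = 0 from CharTwo.two_eq_zero, zero_smul]

lemma negself (x : Galg K) : -x = x := neg_eq_of_add_eq_zero_left (addself K x)

lemma rel_ba : bG K * aG K = aG K * bG K := by
  have h := eq_neg_of_add_eq_zero_right (rel_abba K)
  rw [h, negself]

lemma comm_ab : Commute (aG K) (bG K) := (rel_ba K).symm

lemma rel_ca : cG K * aG K = 0 := by
  rw [← rel_ea, ← mul_assoc, rel_ce, zero_mul]
lemma rel_cb : cG K * bG K = 0 := by
  rw [← rel_eb, ← mul_assoc, rel_ce, zero_mul]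
lemma rel_cc : cG K * cG K = 0 := by
  nth_rewrite 2 [← rel_ec K]
  rw [← mul_assoc, rel_ce, zero_mul]

lemma e_pow_a (i : ℕ) : eG K * aG K ^ (i + 1) = aG K ^ (i + 1) := by
  rw [pow_succ', ← mul_assoc, rel_ea]
lemma pow_a_e (i : ℕ) : aG K ^ (i + 1) * eG K = aG K ^ (i + 1) := by
  rw [pow_succ, mul_assoc, rel_ae]
lemma e_pow_b (j : ℕ) : eG K * bG K ^ (j + 1) = bG K ^ (j + 1) := by
  rw [pow_succ', ← mul_assoc, rel_eb]
lemma pow_b_e (j : ℕ) : bG K ^ (j + 1) * eG K = bG K ^ (j + 1) := by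
  rw [pow_succ, mul_assoc, rel_be]
lemma c_pow_a (i : ℕ) : cG K * aG K ^ (i + 1) = 0 := by
  rw [pow_succ', ← mul_assoc, rel_ca, zero_mul]
lemma c_pow_b (j : ℕ) : cG K * bG K ^ (j + 1) = 0 := by
  rw [pow_succ', ← mul_assoc, rel_cb, zero_mul]
lemma pow_b_c (j : ℕ) : bG K ^ (j + 1) * cG K = 0 := by
  rw [pow_succ, mul_assoc, rel_bc, mul_zero]

lemma comm_pow (i j : ℕ) : bG K ^ j * aG K ^ i = aG K ^ i * bG K ^ j :=
  ((comm_ab K).pow_pow i j).symm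

lemma w_mul (i j k l : ℕ) :
    (aG K ^ i * bG K ^ j) * (aG K ^ k * bG K ^ l) = aG K ^ (i + k) * bG K ^ (j + l) := by
  rw [mul_assoc, ← mul_assoc (bG K ^ j), comm_pow, mul_assoc, ← mul_assoc, ← pow_add, ← pow_add]

lemma e_w (i j : ℕ) (h : 1 ≤ i + j) :
    eG K * (aG K ^ i * bG K ^ j) = aG K ^ i * bG K ^ j := by
  cases i with
  | zero =>
    obtain ⟨j', rfl⟩ : ∃ j', j = j' + 1 := ⟨j - 1, by omega⟩
    simp only [pow_zero, one_mul, e_pow_b]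
  | succ i' => rw [← mul_assoc, e_pow_a]

lemma w_e (i j : ℕ) (h : 1 ≤ i + j) :
    (aG K ^ i * bG K ^ j) * eG K = aG K ^ i * bG K ^ j := by
  cases j with
  | zero =>
    obtain ⟨i', rfl⟩ : ∃ i', i = i' + 1 := ⟨i - 1, by omega⟩
    simp only [pow_zero, mul_one, pow_a_e]
  | succ j' => rw [mul_assoc, pow_b_e]

lemma c_w (i j : ℕ) (h : 1 ≤ i + j) : cG K * (aG K ^ i * bG K ^ j) = 0 := by
  cases i with
  | zero =>
    obtain ⟨j', rfl⟩ : ∃ j', j = j' + 1 := ⟨j - 1, by omega⟩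
    simp only [pow_zero, one_mul, c_pow_b]
  | succ i' => rw [← mul_assoc, c_pow_a, zero_mul]

lemma w_c (i j : ℕ) (h : 1 ≤ j) : (aG K ^ i * bG K ^ j) * cG K = 0 := by
  obtain ⟨j', rfl⟩ : ∃ j', j = j' + 1 := ⟨j - 1, by omega⟩
  rw [mul_assoc, pow_b_c, mul_zero]

lemma e_ac (i : ℕ) : eG K * (aG K ^ i * cG K) = aG K ^ i * cG K := by
  cases i with
  | zero => simp only [pow_zero, one_mul, rel_ec]
  | succ i' => rw [← mul_assoc, e_pow_a]

lemma c_ac (i : ℕ) : cG K * (aG K ^ i * cG K) = 0 := by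
  cases i with
  | zero => simp only [pow_zero, one_mul, rel_cc]
  | succ i' => rw [← mul_assoc, c_pow_a, zero_mul]

lemma ac_e (i : ℕ) : (aG K ^ i * cG K) * eG K = 0 := by
  rw [mul_assoc, rel_ce, mul_zero]

end Gamma

/-! ### The representation `ψ : Γ → MM` -/

section Subst
variable (K)

lemma substY0_X0 : substY0 K (X 0) = (X 0 : 𝔸) := by
  simp [substY0]

lemma substY0_X1 : substY0 K (X 1) = (0 : 𝔸) := by
  simp [substY0]

end Subst

section Psi
variable (K) [CharP K 2]

lemma A_addself (p : MvPolynomial (Fin 2) K) : p + p = 0 := by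
  rw [← two_smul K p, show (2 : K) = 0 from CharTwo.two_eq_zero, zero_smul]

def fg : Fin 4 → MM K
  | 0 => ((1 : 𝔸), (0 : 𝔸), (0 : K))
  | 1 => ((X 0 : 𝔸), (0 : 𝔸), (0 : K))
  | 2 => ((X 1 : 𝔸), (0 : 𝔸), (0 : K))
  | 3 => ((0 : 𝔸), (1 : 𝔸), (0 : K))

lemma fg_rel : ∀ ⦃x y⦄, Grel K x y →
    (FreeAlgebra.lift K (fg K)) x = (FreeAlgebra.lift K (fg K)) y := by
  rintro x y h
  induction h <;>
    simp only [map_mul, map_add, map_zero, FreeAlgebra.lift_ι_apply, fg] <;>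
    refine Prod.ext ?_ (Prod.ext ?_ ?_) <;>
    simp [MM.mul_def, MM.add_def, MM.zero_def, substY0_X1]
  rw [mul_comm]
  exact A_addself K _

def ψ : Galg K →ₐ[K] MM K :=
  RingQuot.liftAlgHom K ⟨FreeAlgebra.lift K (fg K), fg_rel K⟩

lemma ψ_e : ψ K (eG K) = ((1 : 𝔸), (0 : 𝔸), (0 : K)) := by
  rw [eG, ψ, RingQuot.liftAlgHom_mkAlgHom_apply, FreeAlgebra.lift_ι_apply]
  rfl
lemma ψ_a : ψ K (aG K) = ((X 0 : 𝔸), (0 : 𝔸), (0 : K)) := by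
  rw [aG, ψ, RingQuot.liftAlgHom_mkAlgHom_apply, FreeAlgebra.lift_ι_apply]
  rfl
lemma ψ_b : ψ K (bG K) = ((X 1 : 𝔸), (0 : 𝔸), (0 : K)) := by
  rw [bG, ψ, RingQuot.liftAlgHom_mkAlgHom_apply, FreeAlgebra.lift_ι_apply]
  rfl
lemma ψ_c : ψ K (cG K) = ((0 : 𝔸), (1 : 𝔸), (0 : K)) := by
  rw [cG, ψ, RingQuot.liftAlgHom_mkAlgHom_apply, FreeAlgebra.lift_ι_apply]
  rfl

lemma ψ_a_pow (i : ℕ) : ∃ ε : K, ψ K (aG K ^ i) = ((X 0 ^ i : 𝔸), (0 : 𝔸), ε) := by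
  induction i with
  | zero => exact ⟨1, by simp [MM.one_def]; rfl⟩
  | succ n ih =>
    obtain ⟨ε, hε⟩ := ih
    refine ⟨0, ?_⟩
    rw [pow_succ, map_mul, hε, ψ_a, MM.mul_def]
    refine Prod.ext ?_ (Prod.ext ?_ ?_) <;> simp [pow_succ]

lemma ψ_b_pow (j : ℕ) : ∃ ε : K, ψ K (bG K ^ j) = ((X 1 ^ j : 𝔸), (0 : 𝔸), ε) := by
  induction j with
  | zero => exact ⟨1, by simp [MM.one_def]; rfl⟩
  | succ n ih =>
    obtain ⟨ε, hε⟩ := ih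
    refine ⟨0, ?_⟩
    rw [pow_succ, map_mul, hε, ψ_b, MM.mul_def]
    refine Prod.ext ?_ (Prod.ext ?_ ?_) <;> simp [pow_succ]

lemma ψ_ew (i j : ℕ) :
    ψ K (eG K * (aG K ^ i * bG K ^ j)) = ((X 0 ^ i * X 1 ^ j : 𝔸), (0 : 𝔸), (0 : K)) := by
  obtain ⟨ε, hε⟩ := ψ_a_pow K i
  obtain ⟨ε', hε'⟩ := ψ_b_pow K j
  rw [map_mul, map_mul, hε, hε', ψ_e, MM.mul_def, MM.mul_def]
  refine Prod.ext ?_ (Prod.ext ?_ ?_) <;> simp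

lemma ψ_wc (i : ℕ) :
    ψ K (aG K ^ i * cG K) = ((0 : 𝔸), (X 0 ^ i : 𝔸), (0 : K)) := by
  obtain ⟨ε, hε⟩ := ψ_a_pow K i
  rw [map_mul, hε, ψ_c, MM.mul_def]
  refine Prod.ext ?_ (Prod.ext ?_ ?_) <;>
    simp [substY0, MvPolynomial.aeval_X]

end Psi

/-! ### Monomial bookkeeping -/

section Mono
variable (K)

lemma mono_eq (d : Fin 2 →₀ ℕ) (r : K) :
    (MvPolynomial.monomial d r : 𝔸) = r • ((X 0 : 𝔸) ^ d 0 * X 1 ^ d 1) := by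
  rw [MvPolynomial.monomial_eq, Finsupp.prod_fintype _ _ (fun i => pow_zero _),
    Fin.prod_univ_two, ← MvPolynomial.smul_eq_C_mul]

lemma σ_monomial (d : Fin 2 →₀ ℕ) (r : K) :
    substY0 K (MvPolynomial.monomial d r) =
      if d 1 = 0 then MvPolynomial.monomial d r else 0 := by
  rw [mono_eq]
  rw [map_smul, map_mul, map_pow, map_pow, substY0_X0, substY0_X1]
  by_cases h : d 1 = 0
  · rw [if_pos h, h]
    simp
  · rw [if_neg h, zero_pow h, mul_zero, smul_zero]

/-- The linear map `K[x,y] → Γ` sending `x^i y^j ↦ e aⁱ bʲ`. -/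
def Φe : MvPolynomial (Fin 2) K →ₗ[K] Galg K :=
  (MvPolynomial.basisMonomials (Fin 2) K).constr K
    (fun d => eG K * (aG K ^ d 0 * bG K ^ d 1))

/-- The linear map `K[x,y] → Γ` sending `x^i y^j ↦ aⁱ bʲ c`. -/
def Xc : MvPolynomial (Fin 2) K →ₗ[K] Galg K :=
  (MvPolynomial.basisMonomials (Fin 2) K).constr K
    (fun d => (aG K ^ d 0 * bG K ^ d 1) * cG K)

lemma monomial_eq_smul_basis (d : Fin 2 →₀ ℕ) (r : K) :
    (MvPolynomial.monomial d r : 𝔸) = r • (MvPolynomial.basisMonomials (Fin 2) K d) := by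
  rw [MvPolynomial.coe_basisMonomials]
  rw [MvPolynomial.smul_monomial, smul_eq_mul, mul_one]

lemma Φe_monomial (d : Fin 2 →₀ ℕ) (r : K) :
    Φe K (MvPolynomial.monomial d r) = r • (eG K * (aG K ^ d 0 * bG K ^ d 1)) := by
  rw [monomial_eq_smul_basis, map_smul, Φe, Module.Basis.constr_basis]

lemma Xc_monomial (d : Fin 2 →₀ ℕ) (r : K) :
    Xc K (MvPolynomial.monomial d r) = r • ((aG K ^ d 0 * bG K ^ d 1) * cG K) := by
  rw [monomial_eq_smul_basis, map_smul, Xc, Module.Basis.constr_basis]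

lemma Φe_one : Φe K 1 = eG K := by
  rw [show (1 : 𝔸) = MvPolynomial.monomial 0 1 from by
    rw [MvPolynomial.monomial_zero', map_one]]
  rw [Φe_monomial]
  simp

end Mono

section PsiVals
variable (K) [CharP K 2]

lemma ψ_wc2 (i j : ℕ) :
    ψ K ((aG K ^ i * bG K ^ j) * cG K) =
      ((0 : 𝔸), substY0 K ((X 0 : 𝔸) ^ i * X 1 ^ j), (0 : K)) := by
  obtain ⟨ε, hε⟩ := ψ_a_pow K i
  obtain ⟨ε', hε'⟩ := ψ_b_pow K j
  rw [map_mul, map_mul, hε, hε', ψ_c, MM.mul_def, MM.mul_def]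
  refine Prod.ext ?_ (Prod.ext ?_ ?_) <;> simp

lemma ψ_Φe (p : 𝔸) : ψ K (Φe K p) = (p, (0 : 𝔸), (0 : K)) := by
  induction p using MvPolynomial.induction_on' with
  | monomial d r =>
    rw [Φe_monomial, map_smul, ψ_ew, MM.smul_def]
    refine Prod.ext ?_ (Prod.ext ?_ ?_) <;> simp [mono_eq]
  | add p q hp hq =>
    rw [map_add, map_add, hp, hq]
    refine Prod.ext ?_ (Prod.ext ?_ ?_) <;> simp [MM.add_def]

lemma ψ_Xc (p : 𝔸) : ψ K (Xc K p) = ((0 : 𝔸), substY0 K p, (0 : K)) := by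
  induction p using MvPolynomial.induction_on' with
  | monomial d r =>
    rw [Xc_monomial, map_smul, ψ_wc2, MM.smul_def]
    refine Prod.ext ?_ (Prod.ext ?_ ?_) <;>
      simp [mono_eq, map_smul]
  | add p q hp hq =>
    rw [map_add, map_add, hp, hq]
    refine Prod.ext ?_ (Prod.ext ?_ ?_) <;> simp [MM.add_def]

end PsiVals

/-! ### Spanning set of `Γ` and the left inverse `χ` -/

section Span
variable (K) [CharP K 2]

lemma w_mul_apow (i j k : ℕ) :
    (aG K ^ i * bG K ^ j) * aG K ^ k = aG K ^ (i + k) * bG K ^ j := by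
  rw [mul_assoc, comm_pow, ← mul_assoc, ← pow_add]

/-- Spanning set of `Γ`: `1`, `e`, the words `aⁱbʲ` (`i+j ≥ 1`) and `aⁱc`. -/
def Tset : Set (Galg K) :=
  {1} ∪ {eG K} ∪ {z | ∃ i j : ℕ, 1 ≤ i + j ∧ z = aG K ^ i * bG K ^ j} ∪
    {z | ∃ i : ℕ, z = aG K ^ i * cG K}

lemma mem_T_one : (1 : Galg K) ∈ Tset K := Or.inl (Or.inl (Or.inl rfl))
lemma mem_T_e : eG K ∈ Tset K := Or.inl (Or.inl (Or.inr rfl))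
lemma mem_T_w (i j : ℕ) (h : 1 ≤ i + j) : aG K ^ i * bG K ^ j ∈ Tset K :=
  Or.inl (Or.inr ⟨i, j, h, rfl⟩)
lemma mem_T_ac (i : ℕ) : aG K ^ i * cG K ∈ Tset K := Or.inr ⟨i, rfl⟩

lemma T_mul_T : ∀ x ∈ Tset K, ∀ y ∈ Tset K, x * y ∈ Submodule.span K (Tset K) := by
  rintro x (((rfl | rfl) | ⟨i, j, hij, rfl⟩) | ⟨i, rfl⟩) y hy
  · rw [one_mul]; exact Submodule.subset_span hy
  · -- x = e
    rcases hy with ((rfl | rfl) | ⟨k, l, hkl, rfl⟩) | ⟨k, rfl⟩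
    · rw [mul_one]; exact Submodule.subset_span (mem_T_e K)
    · rw [rel_ee]; exact Submodule.subset_span (mem_T_e K)
    · rw [e_w K _ _ hkl]; exact Submodule.subset_span (mem_T_w K _ _ hkl)
    · rw [e_ac]; exact Submodule.subset_span (mem_T_ac K k)
  · -- x = aⁱbʲ
    rcases hy with ((rfl | rfl) | ⟨k, l, hkl, rfl⟩) | ⟨k, rfl⟩
    · rw [mul_one]; exact Submodule.subset_span (mem_T_w K _ _ hij)
    · rw [w_e K _ _ hij]; exact Submodule.subset_span (mem_T_w K _ _ hij)
    · rw [w_mul]; exact Submodule.subset_span (mem_T_w K _ _ (by omega))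
    · cases j with
      | zero =>
        rw [← mul_assoc, w_mul_apow]
        simp only [pow_zero, mul_one]
        exact Submodule.subset_span (mem_T_ac K _)
      | succ j' =>
        rw [← mul_assoc, w_mul_apow, w_c K _ _ (by omega)]
        exact Submodule.zero_mem _
  · -- x = aⁱc
    rcases hy with ((rfl | rfl) | ⟨k, l, hkl, rfl⟩) | ⟨k, rfl⟩
    · rw [mul_one]; exact Submodule.subset_span (mem_T_ac K i)
    · rw [ac_e]; exact Submodule.zero_mem _
    · rw [mul_assoc, c_w K _ _ hkl, mul_zero]; exact Submodule.zero_mem _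
    · rw [mul_assoc, c_ac, mul_zero]; exact Submodule.zero_mem _

lemma spanT : Submodule.span K (Tset K) = ⊤ := by
  rw [eq_top_iff]
  rintro x -
  obtain ⟨y, rfl⟩ := RingQuot.mkAlgHom_surjective K (Grel K) x
  induction y using FreeAlgebra.induction with
  | grade0 r =>
    rw [AlgHom.commutes, Algebra.algebraMap_eq_smul_one]
    exact Submodule.smul_mem _ _ (Submodule.subset_span (mem_T_one K))
  | grade1 i =>
    fin_cases i <;> simp only [Fin.isValue, Fin.mk_one]
    · exact Submodule.subset_span (mem_T_e K)
    · show RingQuot.mkAlgHom K (Grel K) (FreeAlgebra.ι K 1) ∈ _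
      refine Submodule.subset_span ?_
      have : RingQuot.mkAlgHom K (Grel K) (FreeAlgebra.ι K 1) = aG K ^ 1 * bG K ^ 0 := by
        rw [pow_one, pow_zero, mul_one]; rfl
      rw [this]; exact mem_T_w K 1 0 (by omega)
    · show RingQuot.mkAlgHom K (Grel K) (FreeAlgebra.ι K 2) ∈ _
      refine Submodule.subset_span ?_
      have : RingQuot.mkAlgHom K (Grel K) (FreeAlgebra.ι K 2) = aG K ^ 0 * bG K ^ 1 := by
        rw [pow_one, pow_zero, one_mul]; rfl
      rw [this]; exact mem_T_w K 0 1 (by omega)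
    · show RingQuot.mkAlgHom K (Grel K) (FreeAlgebra.ι K 3) ∈ _
      refine Submodule.subset_span ?_
      have : RingQuot.mkAlgHom K (Grel K) (FreeAlgebra.ι K 3) = aG K ^ 0 * cG K := by
        rw [pow_zero, one_mul]; rfl
      rw [this]; exact mem_T_ac K 0
  | mul x y hx hy =>
    rw [map_mul]
    have hle : Submodule.span K (Tset K) * Submodule.span K (Tset K) ≤
        Submodule.span K (Tset K) := by
      rw [Submodule.span_mul_span]
      exact Submodule.span_le.mpr (Set.mul_subset_iff.mpr
        (fun a ha b hb => T_mul_T K a ha b hb))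
    exact hle (Submodule.mul_mem_mul hx hy)
  | add x y hx hy =>
    rw [map_add]
    exact Submodule.add_mem _ hx hy

/-- projections of `MM` as linear maps -/
def pr1 : MM K →ₗ[K] 𝔸 :=
  { toFun := fun z => z.1, map_add' := fun _ _ => rfl, map_smul' := fun _ _ => rfl }
def pr2 : MM K →ₗ[K] 𝔸 :=
  { toFun := fun z => z.2.1, map_add' := fun _ _ => rfl, map_smul' := fun _ _ => rfl }
def pr3 : MM K →ₗ[K] K :=
  { toFun := fun z => z.2.2, map_add' := fun _ _ => rfl, map_smul' := fun _ _ => rfl }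

/-- The linear left inverse of `ψ`. -/
def χ : MM K →ₗ[K] Galg K :=
  (Φe K).comp (pr1 K) + (Xc K).comp (pr2 K) +
    (LinearMap.toSpanSingleton K (Galg K) (1 - eG K)).comp (pr3 K)

lemma χ_apply (z : 𝔸 × 𝔸 × K) :
    χ K z = Φe K z.1 + Xc K z.2.1 + z.2.2 • (1 - eG K) := by
  rfl

lemma Φe_Xpow (i j : ℕ) :
    Φe K ((X 0 : 𝔸) ^ i * X 1 ^ j) = eG K * (aG K ^ i * bG K ^ j) := by
  classical
  set d : Fin 2 →₀ ℕ := Finsupp.single 0 i + Finsupp.single 1 j with hd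
  have hd0 : d 0 = i := by simp [hd, Finsupp.single_apply]
  have hd1 : d 1 = j := by simp [hd, Finsupp.single_apply]
  have : ((X 0 : 𝔸) ^ i * X 1 ^ j) = MvPolynomial.monomial d 1 := by
    rw [mono_eq, hd0, hd1, one_smul]
  rw [this, Φe_monomial, hd0, hd1, one_smul]

lemma Xc_Xpow (i j : ℕ) :
    Xc K ((X 0 : 𝔸) ^ i * X 1 ^ j) = (aG K ^ i * bG K ^ j) * cG K := by
  classical
  set d : Fin 2 →₀ ℕ := Finsupp.single 0 i + Finsupp.single 1 j with hd
  have hd0 : d 0 = i := by simp [hd, Finsupp.single_apply]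
  have hd1 : d 1 = j := by simp [hd, Finsupp.single_apply]
  have : ((X 0 : 𝔸) ^ i * X 1 ^ j) = MvPolynomial.monomial d 1 := by
    rw [mono_eq, hd0, hd1, one_smul]
  rw [this, Xc_monomial, hd0, hd1, one_smul]

lemma χ_ψ (g : Galg K) : χ K (ψ K g) = g := by
  have hg : g ∈ Submodule.span K (Tset K) := by rw [spanT]; trivial
  induction hg using Submodule.span_induction with
  | mem t ht =>
    rcases ht with ((rfl | rfl) | ⟨i, j, hij, rfl⟩) | ⟨i, rfl⟩
    · rw [map_one, MM.one_def, χ_apply, Φe_one]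
      simp
    · rw [ψ_e, χ_apply, Φe_one]
      simp
    · rw [← e_w K _ _ hij, ψ_ew, χ_apply]
      simp only [map_zero, zero_smul, add_zero]
      rw [Φe_Xpow]
    · rw [ψ_wc, χ_apply]
      simp only [map_zero, zero_smul, add_zero, zero_add]
      have : (X 0 : 𝔸) ^ i = (X 0 : 𝔸) ^ i * X 1 ^ 0 := by rw [pow_zero, mul_one]
      rw [this, Xc_Xpow, pow_zero, mul_one]
  | zero => simp
  | add x y hx hy ihx ihy => rw [map_add, map_add, ihx, ihy]
  | smul r x hx ihx => rw [map_smul, map_smul, ihx]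

lemma ψ_inj : Function.Injective (ψ K) :=
  Function.LeftInverse.injective (χ_ψ K)

end Span

/-! ### The center -/

section Center
variable (K) [CharP K 2]

/-- The words `aⁱbʲ`, `j ≥ 1`, spanning the non-unital part of the center. -/
def Wset : Set (Galg K) := {z | ∃ i j : ℕ, 1 ≤ j ∧ z = aG K ^ i * bG K ^ j}

lemma w_central (i j : ℕ) (hj : 1 ≤ j) :
    aG K ^ i * bG K ^ j ∈ Subalgebra.center K (Galg K) := by
  rw [Subalgebra.mem_center_iff]
  intro g
  obtain ⟨y, rfl⟩ := RingQuot.mkAlgHom_surjective K (Grel K) g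
  induction y using FreeAlgebra.induction with
  | grade0 r =>
    rw [AlgHom.commutes]
    exact Algebra.commutes r _
  | grade1 x =>
    fin_cases x
    · show eG K * _ = _ * eG K
      rw [e_w K _ _ (by omega), w_e K _ _ (by omega)]
    · show aG K * _ = _ * aG K
      have h1 : Commute (aG K) (aG K ^ i) := (Commute.refl _).pow_right i
      have h2 : Commute (aG K) (bG K ^ j) := (comm_ab K).pow_right j
      exact h1.mul_right h2
    · show bG K * _ = _ * bG K
      have h1 : Commute (bG K) (aG K ^ i) := ((comm_ab K).symm).pow_right i
      have h2 : Commute (bG K) (bG K ^ j) := (Commute.refl _).pow_right j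
      exact h1.mul_right h2
    · show cG K * _ = _ * cG K
      rw [c_w K _ _ (by omega), w_c K _ _ hj]
  | mul x y hx hy =>
    rw [map_mul, mul_assoc, hy, ← mul_assoc, hx, mul_assoc]
  | add x y hx hy =>
    rw [map_add, add_mul, mul_add, hx, hy]

lemma center_fst (z : Galg K) (hz : z ∈ Subalgebra.center K (Galg K)) :
    (ψ K z).2.1 = 0 ∧
      substY0 K (ψ K z).1 = (ψ K z).2.2 • (1 : 𝔸) := by
  have hc := Subalgebra.mem_center_iff.mp hz
  constructor
  · have he := congrArg (ψ K) (hc (eG K))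
    rw [map_mul, map_mul, ψ_e] at he
    have h2 := congrArg (fun t : MM K => t.2.1) he
    erw [MM.mul_def, MM.mul_def] at h2
    simpa [MM.mul_def] using h2
  · have hcc := congrArg (ψ K) (hc (cG K))
    rw [map_mul, map_mul, ψ_c] at hcc
    have h3 := congrArg (fun t : MM K => t.2.1) hcc
    erw [MM.mul_def, MM.mul_def] at h3
    simpa [MM.mul_def] using h3.symm

lemma Φe_sub_mem (p : 𝔸) :
    Φe K p - Φe K (substY0 K p) ∈ Submodule.span K (Wset K) := by
  induction p using MvPolynomial.induction_on' with
  | monomial d r =>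
    rw [σ_monomial]
    by_cases h : d 1 = 0
    · rw [if_pos h, sub_self]
      exact Submodule.zero_mem _
    · rw [if_neg h, map_zero, sub_zero, Φe_monomial]
      obtain ⟨j, hj⟩ : ∃ j', d 1 = j' + 1 := ⟨d 1 - 1, by omega⟩
      rw [hj, e_w K _ _ (by omega)]
      exact Submodule.smul_mem _ _
        (Submodule.subset_span ⟨d 0, j + 1, by omega, rfl⟩)
  | add p q hp hq =>
    rw [map_add, map_add, map_add, add_sub_add_comm]
    exact Submodule.add_mem _ hp hq

lemma smul_one_eq_C (l : K) : l • (1 : 𝔸) = MvPolynomial.C l := by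
  rw [Algebra.smul_def, mul_one, MvPolynomial.algebraMap_eq]

lemma σ_C (l : K) : substY0 K (MvPolynomial.C l) = MvPolynomial.C l := by
  rw [← MvPolynomial.algebraMap_eq, AlgHom.commutes]

lemma Φe_C (l : K) : Φe K (MvPolynomial.C l) = l • eG K := by
  rw [show (MvPolynomial.C l : 𝔸) = MvPolynomial.monomial 0 l from
    (congrFun MvPolynomial.monomial_zero' l).symm, Φe_monomial]
  simp

lemma center_le_span (z : Galg K) (hz : z ∈ Subalgebra.center K (Galg K)) :
    z ∈ Submodule.span K ({1} ∪ Wset K) := by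
  obtain ⟨hm, hσ⟩ := center_fst K z hz
  have hz2 : z = Φe K (ψ K z).1 + Xc K (ψ K z).2.1 + (ψ K z).2.2 • (1 - eG K) := by
    conv_lhs => rw [← χ_ψ K z]
    erw [χ_apply]
  rw [hm, map_zero, add_zero] at hz2
  set P := (ψ K z).1 with hP
  set l := (ψ K z).2.2 with hl
  have hσ0 : substY0 K (P - MvPolynomial.C l) = 0 := by
    rw [map_sub, σ_C, hσ, smul_one_eq_C, sub_self]
  have hW : Φe K (P - MvPolynomial.C l) ∈ Submodule.span K (Wset K) := by
    have h4 := Φe_sub_mem K (P - MvPolynomial.C l)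
    rwa [hσ0, map_zero, sub_zero] at h4
  have hz3 : z = Φe K (P - MvPolynomial.C l) + l • (1 : Galg K) := by
    rw [hz2, map_sub, Φe_C, smul_sub]
    abel
  rw [hz3]
  refine Submodule.add_mem _ ?_ ?_
  · exact Submodule.span_mono Set.subset_union_right hW
  · exact Submodule.smul_mem _ _ (Submodule.subset_span (Or.inl rfl))

/-- first projection as an algebra map -/
def fstHom : MM K →ₐ[K] MvPolynomial (Fin 2) K :=
  { toFun := fun z => z.1
    map_one' := rfl
    map_mul' := fun _ _ => rfl
    map_zero' := rfl
    map_add' := fun _ _ => rfl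
    commutes' := fun _ => rfl }

end Center

end
end CenterAux

open CenterAux in
/-- If `char K = 2`, the center of `Γ` is exactly the `K`-linear span of `1` together
with all elements `aⁱbʲ` with `i ≥ 0`, `j ≥ 1`; in particular it is isomorphic as a
`K`-algebra to `K ⊕ K[a,b]b` (the subalgebra of a polynomial ring in two variables
consisting of the polynomials that are constant after setting the second variable to
zero). -/
theorem center_eq_of_char_two (K : Type*) [Field K] [CharP K 2] :
    Subalgebra.toSubmodule (Subalgebra.center K (Galg K)) =
      Submodule.span K ({1} ∪ {z | ∃ i j : ℕ, 1 ≤ j ∧ z = aG K ^ i * bG K ^ j}) ∧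
    Nonempty ((Subalgebra.center K (Galg K)) ≃ₐ[K] Rsub K) := by
  classical
  have hspan : Subalgebra.toSubmodule (Subalgebra.center K (Galg K)) =
      Submodule.span K ({1} ∪ Wset K) := by
    apply le_antisymm
    · intro z hz
      exact center_le_span K z ((Subalgebra.mem_toSubmodule _).mp hz)
    · rw [Submodule.span_le]
      rintro z hz
      rcases hz with hz | ⟨i, j, hj, rfl⟩
      · rw [Set.mem_singleton_iff] at hz
        subst hz
        exact (Subalgebra.mem_toSubmodule _).mpr (one_mem _)
      · exact (Subalgebra.mem_toSubmodule _).mpr (w_central K i j hj)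
  refine ⟨hspan, ?_⟩
  -- the isomorphism with `Rsub`
  set ρ0 : Subalgebra.center K (Galg K) →ₐ[K] MvPolynomial (Fin 2) K :=
    ((fstHom (K := K)).comp (ψ K)).comp (Subalgebra.center K (Galg K)).val with hρ0
  have hρ0val : ∀ z : Subalgebra.center K (Galg K), ρ0 z = (ψ K z.1).1 := fun z => rfl
  have hmem : ∀ z : Subalgebra.center K (Galg K), ρ0 z ∈ Rsub K := by
    intro z
    obtain ⟨hm, hσ⟩ := center_fst K z.1 z.2
    rw [Rsub, Subalgebra.mem_comap, Algebra.mem_bot]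
    refine ⟨(ψ K z.1).2.2, ?_⟩
    rw [hρ0val, hσ, smul_one_eq_C, MvPolynomial.algebraMap_eq]
  set ρ : Subalgebra.center K (Galg K) →ₐ[K] Rsub K :=
    ρ0.codRestrict (Rsub K) hmem with hρ
  have hinj : Function.Injective ρ := by
    intro z w h
    have h1 : (ψ K z.1).1 = (ψ K w.1).1 := congrArg Subtype.val h
    obtain ⟨hmz, hσz⟩ := center_fst K z.1 z.2
    obtain ⟨hmw, hσw⟩ := center_fst K w.1 w.2
    have h3 : (ψ K z.1).2.2 = (ψ K w.1).2.2 := by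
      have h4 : (ψ K z.1).2.2 • (1 : MvPolynomial (Fin 2) K) =
          (ψ K w.1).2.2 • (1 : MvPolynomial (Fin 2) K) := by
        rw [← hσz, ← hσw, h1]
      exact smul_left_injective K (one_ne_zero) h4
    apply Subtype.ext
    apply ψ_inj K
    exact Prod.ext h1 (Prod.ext (hmz.trans hmw.symm) h3)
  have hsurj : Function.Surjective ρ := by
    rintro ⟨f, hf⟩
    have hf2 : substY0 K f ∈ (⊥ : Subalgebra K (MvPolynomial (Fin 2) K)) := by
      rw [Rsub, Subalgebra.mem_comap] at hf
      exact hf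
    obtain ⟨l, hl⟩ := Algebra.mem_bot.mp hf2
    have hσg : substY0 K (f - MvPolynomial.C l) = 0 := by
      rw [map_sub, σ_C, ← hl, MvPolynomial.algebraMap_eq, sub_self]
    set z : Galg K := Φe K (f - MvPolynomial.C l) + l • (1 : Galg K) with hzdef
    have hW : Φe K (f - MvPolynomial.C l) ∈ Submodule.span K (Wset K) := by
      have h4 := Φe_sub_mem K (f - MvPolynomial.C l)
      rwa [hσg, map_zero, sub_zero] at h4
    have hzc : z ∈ Subalgebra.center K (Galg K) := by
      rw [← Subalgebra.mem_toSubmodule, hspan]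
      exact Submodule.add_mem _
        (Submodule.span_mono Set.subset_union_right hW)
        (Submodule.smul_mem _ _ (Submodule.subset_span (Or.inl rfl)))
    refine ⟨⟨z, hzc⟩, ?_⟩
    apply Subtype.ext
    show ρ0 ⟨z, hzc⟩ = f
    rw [hρ0val]
    show (ψ K z).1 = f
    rw [hzdef, map_add, map_smul, map_one, ψ_Φe]
    show (f - MvPolynomial.C l) + l • (1 : MvPolynomial (Fin 2) K) = f
    rw [smul_one_eq_C, sub_add_cancel]
  exact ⟨AlgEquiv.ofBijective ρ ⟨hinj, hsurj⟩⟩
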